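/- If K is a compact Hausdorff space and H is a closed hyperplane of C(K) (that is, H is the kernel of a nonzero continuous linear functional on C(K)), then H is a C-space. In particular, for distinct points x₀, x₁ ∈ K, the hyperplane {g ∈ C(K) : g(x₀) = g(x₁)} is isometrically isomorphic to C(K̃), where K̃ is the quotient space of K obtained by identifying the points x₀ and x₁ (a compact Hausdorff space). -/

import Mathlib

/-- A Banach space is a *C-space* if it is isomorphic (via a continuous linear
equivalence) to `C(K, ℝ)` for some compact Hausdorff space `K`. -/
def IsCSpace (X : Type*) [NormedAddCommGroup X] [NormedSpace ℝ X] : Prop :=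
  ∃ (K : Type) (_ : TopologicalSpace K) (_ : CompactSpace K) (_ : T2Space K),
    Nonempty (X ≃L[ℝ] C(K, ℝ))

/-- The setoid on `K` identifying the two points `x₀` and `x₁`. -/
def glueSetoid {K : Type*} (x₀ x₁ : K) : Setoid K :=
  ⟨fun a b => a = b ∨ (a = x₀ ∧ b = x₁) ∨ (a = x₁ ∧ b = x₀), by
    constructor
    · intro a; exact Or.inl rfl
    · intro a b h; tauto
    · intro a b c hab hbc
      rcases hab with h1 | ⟨h1, h2⟩ | ⟨h1, h2⟩ <;> rcases hbc with h3 | ⟨h3, h4⟩ | ⟨h3, h4⟩ <;>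
        subst h1 <;> try subst h3
      all_goals tauto⟩

/-- The hyperplane `{g ∈ C(K, ℝ) : g x₀ = g x₁}`, as a submodule of `C(K, ℝ)`. -/
def eqHyperplane (K : Type*) [TopologicalSpace K] (x₀ x₁ : K) : Submodule ℝ C(K, ℝ) where
  carrier := {g : C(K, ℝ) | g x₀ = g x₁}
  add_mem' := by
    intro a b ha hb
    simp only [Set.mem_setOf_eq, ContinuousMap.add_apply] at *
    rw [ha, hb]
  zero_mem' := by simp
  smul_mem' := by
    intro c a ha
    simp only [Set.mem_setOf_eq, ContinuousMap.smul_apply] at *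
    rw [ha]

lemma ker_eq_of_le {X : Type*} [NormedAddCommGroup X] [NormedSpace ℝ X]
    {φ ψ : X →L[ℝ] ℝ} (hφ : φ ≠ 0) (hψ : ψ ≠ 0)
    (h : LinearMap.ker (ψ : X →ₗ[ℝ] ℝ) ≤ LinearMap.ker (φ : X →ₗ[ℝ] ℝ)) : LinearMap.ker (φ : X →ₗ[ℝ] ℝ) = LinearMap.ker (ψ : X →ₗ[ℝ] ℝ) := by
  obtain ⟨w, hw⟩ : ∃ w, ψ w ≠ 0 := by
    by_contra hc; push_neg at hc; exact hψ (by ext x; simpa using hc x)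
  have key : ∀ x, φ x = ψ x / ψ w * φ w := by
    intro x
    have hx : x - (ψ x / ψ w) • w ∈ LinearMap.ker (ψ : X →ₗ[ℝ] ℝ) := by
      simp [LinearMap.mem_ker, hw]
    have := h hx
    simp only [LinearMap.mem_ker, map_sub, map_smul, smul_eq_mul, sub_eq_zero] at this
    exact this
  have hφw : φ w ≠ 0 := by
    intro h0
    exact hφ (by ext x; simp [key x, h0])
  ext x
  simp only [LinearMap.mem_ker, ContinuousLinearMap.coe_coe, key x]
  constructor
  · intro h0
    rcases mul_eq_zero.1 h0 with h1 | h1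
    · exact (div_eq_zero_iff.1 h1).elim id (fun h2 => absurd h2 hw)
    · exact absurd h1 hφw
  · intro h0; simp [h0]


lemma ker_equiv {X : Type*} [NormedAddCommGroup X] [NormedSpace ℝ X]
    (φ ψ : X →L[ℝ] ℝ) (hφ : φ ≠ 0) (hψ : ψ ≠ 0) :
    Nonempty (↥(LinearMap.ker (φ : X →ₗ[ℝ] ℝ)) ≃L[ℝ] ↥(LinearMap.ker (ψ : X →ₗ[ℝ] ℝ))) := by
  by_cases h1 : LinearMap.ker (ψ : X →ₗ[ℝ] ℝ) ≤ LinearMap.ker (φ : X →ₗ[ℝ] ℝ)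
  · rw [ker_eq_of_le hφ hψ h1]
    exact ⟨ContinuousLinearEquiv.refl ℝ _⟩
  by_cases h2 : LinearMap.ker (φ : X →ₗ[ℝ] ℝ) ≤ LinearMap.ker (ψ : X →ₗ[ℝ] ℝ)
  · rw [ker_eq_of_le hψ hφ h2]
    exact ⟨ContinuousLinearEquiv.refl ℝ _⟩
  obtain ⟨u, hu1, hu2⟩ := SetLike.not_le_iff_exists.1 h1
  obtain ⟨v, hv1, hv2⟩ := SetLike.not_le_iff_exists.1 h2
  rw [LinearMap.mem_ker, ContinuousLinearMap.coe_coe] at hu1 hv1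
  rw [LinearMap.mem_ker, ContinuousLinearMap.coe_coe] at hu2 hv2
  set A : X →L[ℝ] X := ContinuousLinearMap.id ℝ X + ((ψ v)⁻¹ • ψ).smulRight (u - v) with hA
  set B : X →L[ℝ] X := ContinuousLinearMap.id ℝ X + ((φ u)⁻¹ • φ).smulRight (v - u) with hB
  have hAx : ∀ x, A x = x + ((ψ v)⁻¹ * ψ x) • (u - v) := by
    intro x; simp [hA]
  have hBx : ∀ x, B x = x + ((φ u)⁻¹ * φ x) • (v - u) := by
    intro x; simp [hB]
  have hAker : ∀ x, A x ∈ LinearMap.ker (ψ : X →ₗ[ℝ] ℝ) := by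
    intro x
    rw [LinearMap.mem_ker, hAx]
    simp only [ContinuousLinearMap.coe_coe, map_add, map_smul, map_sub, hu1, smul_eq_mul]
    field_simp
    ring
  have hBker : ∀ x, B x ∈ LinearMap.ker (φ : X →ₗ[ℝ] ℝ) := by
    intro x
    rw [LinearMap.mem_ker, hBx]
    simp only [ContinuousLinearMap.coe_coe, map_add, map_smul, map_sub, hv1, smul_eq_mul]
    field_simp
    ring
  have hBA : ∀ x ∈ LinearMap.ker (φ : X →ₗ[ℝ] ℝ), B (A x) = x := by
    intro x hx
    rw [LinearMap.mem_ker, ContinuousLinearMap.coe_coe] at hx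
    rw [hAx, hBx]
    simp only [map_add, map_smul, map_sub, hx, hv1, smul_eq_mul]
    match_scalars <;> field_simp <;> ring
  have hAB : ∀ x ∈ LinearMap.ker (ψ : X →ₗ[ℝ] ℝ), A (B x) = x := by
    intro x hx
    rw [LinearMap.mem_ker, ContinuousLinearMap.coe_coe] at hx
    rw [hBx, hAx]
    simp only [map_add, map_smul, map_sub, hx, hu1, smul_eq_mul]
    match_scalars <;> field_simp <;> ring
  exact ⟨ContinuousLinearEquiv.equivOfInverse
    ((A.comp (LinearMap.ker (φ : X →ₗ[ℝ] ℝ)).subtypeL).codRestrict (LinearMap.ker (ψ : X →ₗ[ℝ] ℝ)) fun x => hAker x)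
    ((B.comp (LinearMap.ker (ψ : X →ₗ[ℝ] ℝ)).subtypeL).codRestrict (LinearMap.ker (φ : X →ₗ[ℝ] ℝ)) fun x => hBker x)
    (fun x => Subtype.ext (hBA x x.2)) (fun x => Subtype.ext (hAB x x.2))⟩

variable {K : Type} [TopologicalSpace K] [CompactSpace K] [T2Space K]

lemma sep_lemma (x₀ x₁ x y : K) (h : ¬ (glueSetoid x₀ x₁).r x y) :
    ∃ g : C(K, ℝ), g x₀ = g x₁ ∧ g x ≠ g y := by
  change ¬ (x = y ∨ (x = x₀ ∧ y = x₁) ∨ (x = x₁ ∧ y = x₀)) at h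
  simp only [glueSetoid, not_or, not_and] at h
  obtain ⟨hxy, h01, h10⟩ := h
  by_cases hy : y = x₀ ∨ y = x₁
  · have hx0 : x ≠ x₀ := by rintro rfl; rcases hy with rfl | rfl; exacts [hxy rfl, h01 rfl rfl]
    have hx1 : x ≠ x₁ := by rintro rfl; rcases hy with rfl | rfl; exacts [h10 rfl rfl, hxy rfl]
    obtain ⟨g, hg0, hg1, -⟩ := exists_continuous_zero_one_of_isClosed
      (isClosed_singleton (x := x))
      ((Set.toFinite ({x₀, x₁} : Set K)).isClosed)
      (by simp [Set.disjoint_left, hx0, hx1])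
    have e0 : g x₀ = 1 := hg1 (by simp)
    have e1 : g x₁ = 1 := hg1 (by simp)
    have ex : g x = 0 := hg0 rfl
    have ey : g y = 1 := by rcases hy with rfl | rfl; exacts [e0, e1]
    exact ⟨g, by rw [e0, e1], by rw [ex, ey]; norm_num⟩
  · push_neg at hy
    obtain ⟨g, hg0, hg1, -⟩ := exists_continuous_zero_one_of_isClosed
      ((Set.toFinite ({x, x₀, x₁} : Set K)).isClosed)
      (isClosed_singleton (x := y))
      (by simp only [Set.disjoint_left, Set.mem_insert_iff, Set.mem_singleton_iff]
          rintro a (rfl | rfl | rfl) rfl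
          exacts [hxy rfl, hy.1 rfl, hy.2 rfl])
    have e0 : g x₀ = 0 := hg0 (by simp)
    have e1 : g x₁ = 0 := hg0 (by simp)
    have ex : g x = 0 := hg0 (by simp)
    have ey : g y = 1 := hg1 rfl
    exact ⟨g, by rw [e0, e1], by rw [ex, ey]; norm_num⟩

/-- The lift of a hyperplane element to the quotient. -/
noncomputable def liftMap (x₀ x₁ : K) (g : ↥(eqHyperplane K x₀ x₁)) :
    C(Quotient (glueSetoid x₀ x₁), ℝ) :=
  ⟨Quotient.lift (g : C(K, ℝ)) (by
      rintro a b (rfl | ⟨rfl, rfl⟩ | ⟨rfl, rfl⟩)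
      · rfl
      · exact g.2
      · exact g.2.symm),
    Continuous.quotient_lift (g : C(K, ℝ)).continuous _⟩

omit [CompactSpace K] [T2Space K] in
@[simp] lemma liftMap_mk (x₀ x₁ : K) (g : ↥(eqHyperplane K x₀ x₁)) (a : K) :
    liftMap x₀ x₁ g (Quotient.mk _ a) = (g : C(K, ℝ)) a := rfl

instance glue_t2 (x₀ x₁ : K) : T2Space (Quotient (glueSetoid x₀ x₁)) := by
  apply T2Space.of_injective_continuous
    (f := fun q (g : ↥(eqHyperplane K x₀ x₁)) => liftMap x₀ x₁ g q)
  · intro q q' hqq'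
    refine Quotient.inductionOn₂ q q' (fun a b hab => ?_) hqq'
    refine Quotient.sound ?_
    by_contra hrel
    obtain ⟨g, hg01, hgab⟩ := sep_lemma x₀ x₁ a b hrel
    exact hgab (congrFun hab ⟨g, hg01⟩)
  · exact continuous_pi fun g => (liftMap x₀ x₁ g).continuous

/-- The isometric isomorphism. -/
noncomputable def glueIso (x₀ x₁ : K) :
    ↥(eqHyperplane K x₀ x₁) ≃ₗᵢ[ℝ] C(Quotient (glueSetoid x₀ x₁), ℝ) where
  toFun := liftMap x₀ x₁
  map_add' g h := by ext q; refine Quotient.inductionOn q fun a => rfl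
  map_smul' c g := by ext q; refine Quotient.inductionOn q fun a => rfl
  invFun f := ⟨f.comp ⟨Quotient.mk _, continuous_quotient_mk'⟩,
    show f _ = f _ from congrArg f (Quotient.sound (Or.inr (Or.inl ⟨rfl, rfl⟩)))⟩
  left_inv g := by apply Subtype.ext; ext a; rfl
  right_inv f := by ext q; refine Quotient.inductionOn q fun a => rfl
  norm_map' g := by
    refine le_antisymm ?_ ?_
    · refine (ContinuousMap.norm_le _ (norm_nonneg _)).2 fun q => ?_
      refine Quotient.inductionOn q fun a => ?_
      exact (liftMap_mk x₀ x₁ g a).symm ▸ ((g : C(K, ℝ)).norm_coe_le_norm a)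
    · refine (ContinuousMap.norm_le _ (norm_nonneg _)).2 fun a => ?_
      exact (liftMap x₀ x₁ g).norm_coe_le_norm (Quotient.mk _ a)

/-- A closed hyperplane (the kernel of a nonzero continuous linear functional) in `C(K)`
is a C-space; moreover, for distinct `x₀, x₁ ∈ K` the hyperplane
`{g : g x₀ = g x₁}` is isometrically isomorphic to `C(K̃)` where `K̃` is the compact
Hausdorff quotient of `K` identifying `x₀` and `x₁`. -/
theorem statement1 (K : Type) [TopologicalSpace K] [CompactSpace K] [T2Space K] :
    (∀ φ : C(K, ℝ) →L[ℝ] ℝ, φ ≠ 0 → IsCSpace ↥(LinearMap.ker (φ : C(K, ℝ) →ₗ[ℝ] ℝ))) ∧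
    (∀ x₀ x₁ : K, x₀ ≠ x₁ →
      ∃ (_ : CompactSpace (Quotient (glueSetoid x₀ x₁)))
        (_ : T2Space (Quotient (glueSetoid x₀ x₁))),
        Nonempty (↥(eqHyperplane K x₀ x₁) ≃ₗᵢ[ℝ] C(Quotient (glueSetoid x₀ x₁), ℝ))) := by
  constructor
  · intro φ hφ
    by_cases hK : ∃ x₀ x₁ : K, x₀ ≠ x₁
    · obtain ⟨x₀, x₁, hne⟩ := hK
      set ψ : C(K, ℝ) →L[ℝ] ℝ :=
        ContinuousMap.evalCLM (R := ℝ) x₀ - ContinuousMap.evalCLM (R := ℝ) x₁ with hψdef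
      have hψapp : ∀ g : C(K, ℝ), ψ g = g x₀ - g x₁ := fun g => rfl
      obtain ⟨g, hg0, hg1, -⟩ := exists_continuous_zero_one_of_isClosed
        (isClosed_singleton (x := x₀)) (isClosed_singleton (x := x₁))
        (by simp [Set.disjoint_left, hne])
      have hψ : ψ ≠ 0 := by
        intro h0
        have := ContinuousLinearMap.ext_iff.1 h0 g
        rw [hψapp, hg0 rfl, hg1 rfl] at this
        norm_num at this
      have hkerψ : LinearMap.ker (ψ : C(K, ℝ) →ₗ[ℝ] ℝ) = eqHyperplane K x₀ x₁ := by
        ext f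
        rw [LinearMap.mem_ker, ContinuousLinearMap.coe_coe, hψapp, sub_eq_zero]
        exact Iff.rfl
      obtain ⟨e⟩ := ker_equiv φ ψ hφ hψ
      rw [hkerψ] at e
      exact ⟨Quotient (glueSetoid x₀ x₁), inferInstance, inferInstance, inferInstance,
        ⟨e.trans (glueIso x₀ x₁).toContinuousLinearEquiv⟩⟩
    · push_neg at hK
      haveI : Subsingleton K := ⟨hK⟩
      have hker : LinearMap.ker (φ : C(K, ℝ) →ₗ[ℝ] ℝ) = ⊥ := by
        by_cases hKe : Nonempty K
        · obtain ⟨pt⟩ := hKe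
          have hrep : ∀ g : C(K, ℝ), g = g pt • (1 : C(K, ℝ)) := by
            intro g; ext z; rw [Subsingleton.elim z pt]; simp
          have h1 : φ 1 ≠ 0 := by
            intro h0
            exact hφ (by ext g; rw [hrep g]; simp [h0])
          rw [eq_bot_iff]
          intro g hg
          rw [LinearMap.mem_ker] at hg
          rw [hrep g] at hg ⊢
          simp only [map_smul, smul_eq_mul] at hg
          rcases mul_eq_zero.1 hg with h | h
          · simp [h]
          · exact absurd h h1
        · exfalso
          rw [not_nonempty_iff] at hKe
          exact hφ (by ext g; rw [show g = 0 from by ext z; exact isEmptyElim z]; simp)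
      haveI : Subsingleton C(Empty, ℝ) := ⟨fun f g => by ext z; exact z.elim⟩
      refine ⟨Empty, inferInstance, inferInstance, inferInstance, ?_⟩
      rw [hker]
      exact ⟨ContinuousLinearEquiv.equivOfInverse 0 0
        (fun x => Subsingleton.elim _ _) (fun x => Subsingleton.elim _ _)⟩
  · intro x₀ x₁ hne
    exact ⟨inferInstance, inferInstance, ⟨glueIso x₀ x₁⟩⟩
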